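/- Let (Ω, 𝔄, ℙ) be a probability space and P : Ω → [0,1] a random variable with ℙ(P ≤ t) ≤ t for every t ∈ [0,1]. Let g : [0,1] → [0,∞] be an antitone (decreasing) function with ∫₀¹ g(t) dt ≤ 1 (Lebesgue integral in [0,∞]). Then E[g(P)] ≤ 1, i.e., g(P) is an e-value. -/

import Mathlib

open MeasureTheory Set

/-- ENNReal-valued layer cake formula. -/
lemma layercake_ennreal {α : Type*} [MeasurableSpace α] (ν : Measure α) [SigmaFinite ν]
    (f : α → ENNReal) (hf : Measurable f) :
    ∫⁻ x, f x ∂ν = ∫⁻ s in Set.Ioi (0 : ℝ), ν {x | ENNReal.ofReal s < f x} := by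
  have h1 : ∀ x, f x
      = ∫⁻ s in Set.Ioi (0 : ℝ), Set.indicator {s : ℝ | ENNReal.ofReal s < f x} 1 s := by
    intro x
    have hmeas : MeasurableSet {s : ℝ | ENNReal.ofReal s < f x} :=
      measurableSet_lt ENNReal.measurable_ofReal measurable_const
    rw [lintegral_indicator_one hmeas, Measure.restrict_apply hmeas]
    by_cases h : f x = ⊤
    · simp [h, Set.inter_eq_right.mpr, show {s : ℝ | ENNReal.ofReal s < ⊤} = Set.univ by
        ext s; simp [ENNReal.ofReal_lt_top]]
    · have : {s : ℝ | ENNReal.ofReal s < f x} ∩ Set.Ioi 0 = Set.Ioo 0 ((f x).toReal) := by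
        ext s
        simp only [Set.mem_inter_iff, Set.mem_setOf_eq, Set.mem_Ioi, Set.mem_Ioo]
        constructor
        · rintro ⟨hlt, hs⟩
          exact ⟨hs, by rwa [← ENNReal.ofReal_lt_iff_lt_toReal hs.le h]⟩
        · rintro ⟨hs, hlt⟩
          exact ⟨by rwa [ENNReal.ofReal_lt_iff_lt_toReal hs.le h], hs⟩
      rw [this, Real.volume_Ioo, sub_zero, ENNReal.ofReal_toReal h]
  calc ∫⁻ x, f x ∂ν
      = ∫⁻ x, (∫⁻ s in Set.Ioi (0 : ℝ),
          Set.indicator {s : ℝ | ENNReal.ofReal s < f x} 1 s) ∂ν := by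
        exact lintegral_congr h1
    _ = ∫⁻ s in Set.Ioi (0 : ℝ), (∫⁻ x,
          Set.indicator {s : ℝ | ENNReal.ofReal s < f x} 1 s ∂ν) := by
        apply lintegral_lintegral_swap
        have hset : MeasurableSet {p : α × ℝ | ENNReal.ofReal p.2 < f p.1} :=
          measurableSet_lt (ENNReal.measurable_ofReal.comp measurable_snd)
            (hf.comp measurable_fst)
        have : (Function.uncurry fun x s =>
            Set.indicator {s : ℝ | ENNReal.ofReal s < f x} (1 : ℝ → ENNReal) s)
            = Set.indicator {p : α × ℝ | ENNReal.ofReal p.2 < f p.1} 1 := by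
          ext ⟨x, s⟩
          simp [Function.uncurry, Set.indicator_apply]
        rw [this]
        exact (measurable_one.indicator hset).aemeasurable
    _ = ∫⁻ s in Set.Ioi (0 : ℝ), ν {x | ENNReal.ofReal s < f x} := by
        apply lintegral_congr
        intro s
        have : (fun x => Set.indicator {s : ℝ | ENNReal.ofReal s < f x} (1 : ℝ → ENNReal) s)
            = Set.indicator {x | ENNReal.ofReal s < f x} 1 := by
          ext x; simp [Set.indicator_apply]
        rw [this]
        exact lintegral_indicator_one (measurableSet_lt measurable_const hf)

/-- Calibration: applying a p-to-e calibrator to a p-value yields an e-value. If `P` is a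
super-uniform p-value (`ℙ(P ≤ t) ≤ t` for all `t ∈ [0,1]`) and `g : [0,1] → [0,∞]` is
decreasing with `∫₀¹ g(t) dt ≤ 1`, then `E[g(P)] ≤ 1`. -/
theorem calibrator_gives_evalue
    {Ω : Type*} [MeasurableSpace Ω] (μ : Measure Ω) [IsProbabilityMeasure μ]
    (P : Ω → ℝ) (hPmeas : Measurable P)
    (hPrange : ∀ ω, P ω ∈ Set.Icc (0 : ℝ) 1)
    (hPsuper : ∀ t ∈ Set.Icc (0 : ℝ) 1, μ {ω | P ω ≤ t} ≤ ENNReal.ofReal t)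
    (g : ℝ → ENNReal)
    (hg : AntitoneOn g (Set.Icc (0 : ℝ) 1))
    (hgint : ∫⁻ t in Set.Icc (0 : ℝ) 1, g t ≤ 1) :
    ∫⁻ ω, g (P ω) ∂μ ≤ 1 := by
  -- Extend `g` to an antitone function on all of ℝ.
  set g' : ℝ → ENNReal := fun t => g (max 0 (min 1 t)) with hg'def
  have hproj : ∀ t ∈ Set.Icc (0 : ℝ) 1, max 0 (min 1 t) = t := by
    intro t ht
    rw [min_eq_right ht.2, max_eq_right ht.1]
  have hprojmem : ∀ t : ℝ, max 0 (min 1 t) ∈ Set.Icc (0 : ℝ) 1 :=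
    fun t => ⟨le_max_left _ _, max_le zero_le_one (min_le_left _ _)⟩
  have hg'anti : Antitone g' := by
    intro a b hab
    exact hg (hprojmem a) (hprojmem b) (max_le_max le_rfl (min_le_min le_rfl hab))
  have hg'meas : Measurable g' := hg'anti.measurable
  have hg'eq : ∀ t ∈ Set.Icc (0 : ℝ) 1, g' t = g t := by
    intro t ht; simp only [hg'def, hproj t ht]
  have hgP : ∀ ω, g (P ω) = g' (P ω) := fun ω => (hg'eq _ (hPrange ω)).symm
  have hgint' : ∫⁻ t in Set.Icc (0 : ℝ) 1, g' t ≤ 1 := by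
    rwa [setLIntegral_congr_fun measurableSet_Icc
      (fun t ht => hg'eq t ht)]
  simp only [hgP]
  -- Layer cake on both sides.
  rw [layercake_ennreal μ (fun ω => g' (P ω)) (hg'meas.comp hPmeas)]
  have key : ∀ s ∈ Set.Ioi (0 : ℝ),
      μ {ω | ENNReal.ofReal s < g' (P ω)}
        ≤ (volume.restrict (Set.Icc (0 : ℝ) 1)) {t | ENNReal.ofReal s < g' t} := by
    intro s _
    set A : Set ℝ := {t ∈ Set.Icc (0 : ℝ) 1 | ENNReal.ofReal s < g t} with hA
    rcases A.eq_empty_or_nonempty with hAe | hAne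
    · have : {ω | ENNReal.ofReal s < g' (P ω)} = ∅ := by
        ext ω
        simp only [Set.mem_setOf_eq, Set.mem_empty_iff_false, iff_false, not_lt]
        by_contra h
        push_neg at h
        have : P ω ∈ A := ⟨hPrange ω, by rwa [← hg'eq _ (hPrange ω)]⟩
        rw [hAe] at this; exact this
      rw [this]; simp
    · set t₀ : ℝ := sSup A with ht₀
      have hAbdd : BddAbove A := ⟨1, fun t ht => ht.1.2⟩
      have ht₀mem : t₀ ∈ Set.Icc (0 : ℝ) 1 := by
        obtain ⟨a, ha⟩ := id hAne
        exact ⟨ha.1.1.trans (le_csSup hAbdd ha), csSup_le hAne fun t ht => ht.1.2⟩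
      have hsub : {ω | ENNReal.ofReal s < g' (P ω)} ⊆ {ω | P ω ≤ t₀} := by
        intro ω hω
        have : P ω ∈ A := ⟨hPrange ω, by
          rw [← hg'eq _ (hPrange ω)]; exact hω⟩
        exact le_csSup hAbdd this
      calc μ {ω | ENNReal.ofReal s < g' (P ω)}
          ≤ μ {ω | P ω ≤ t₀} := measure_mono hsub
        _ ≤ ENNReal.ofReal t₀ := hPsuper t₀ ht₀mem
        _ = volume (Set.Ico 0 t₀) := by rw [Real.volume_Ico, sub_zero]
        _ = (volume.restrict (Set.Icc (0 : ℝ) 1)) (Set.Ico 0 t₀) := by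
            rw [Measure.restrict_apply measurableSet_Ico,
              Set.inter_eq_left.mpr (Set.Ico_subset_Icc_self.trans (Set.Icc_subset_Icc le_rfl ht₀mem.2))]
        _ ≤ (volume.restrict (Set.Icc (0 : ℝ) 1)) {t | ENNReal.ofReal s < g' t} := by
            apply measure_mono
            intro t ht
            obtain ⟨u, hu, htu⟩ := exists_lt_of_lt_csSup hAne ht.2
            have htmem : t ∈ Set.Icc (0 : ℝ) 1 := ⟨ht.1, htu.le.trans hu.1.2⟩
            have : g u ≤ g t := hg htmem hu.1 htu.le
            rw [Set.mem_setOf_eq, hg'eq _ htmem]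
            exact lt_of_lt_of_le hu.2 this
  calc ∫⁻ s in Set.Ioi (0 : ℝ), μ {ω | ENNReal.ofReal s < g' (P ω)}
      ≤ ∫⁻ s in Set.Ioi (0 : ℝ),
          (volume.restrict (Set.Icc (0 : ℝ) 1)) {t | ENNReal.ofReal s < g' t} :=
        setLIntegral_mono' measurableSet_Ioi key
    _ = ∫⁻ t in Set.Icc (0 : ℝ) 1, g' t :=
        (layercake_ennreal (volume.restrict (Set.Icc (0 : ℝ) 1)) g' hg'meas).symm
    _ ≤ 1 := hgint'
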